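/- A monomial ideal I ⊆ K[x_1,...,x_n] generated in degree d is d-linear lexsegment if and only if its image Φ(I) ⊆ K[x_1,...,x_{n+d-1}] under the squarefree operation is d-linear squarefree lexsegment. -/

import Mathlib

set_option synthInstance.maxHeartbeats 1000000
set_option maxHeartbeats 1000000

open MvPolynomial

namespace Paper

/-! ### Combinatorics of monomials -/

/-- a monomial in `n` variables, encoded by its exponent vector -/
abbrev Mono (n : ℕ) := Fin n →₀ ℕ

/-- total degree of a monomial -/
def mdeg {n : ℕ} (u : Mono n) : ℕ := u.sum fun _ e => e

/-- `maxVar u` is the largest index (1-indexed) of a variable dividing `u`; `maxVar 1 = 0`. -/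
def maxVar {n : ℕ} (u : Mono n) : ℕ := u.support.sup fun i => (i : ℕ) + 1

/-- `LexGT u v` : `u >_lex v` (lexicographic order with `x_1 > x_2 > ⋯ > x_n`). -/
def LexGT {n : ℕ} (u v : Mono n) : Prop :=
  ∃ i : Fin n, v i < u i ∧ ∀ j : Fin n, j < i → u j = v j

/-- strongly stable set of monomials -/
def SStableSet {n : ℕ} (V : Set (Mono n)) : Prop :=
  ∀ u : Mono n, ∀ p q : Fin n, p < q → u + Finsupp.single q 1 ∈ V →
    u + Finsupp.single p 1 ∈ V

/-- `Dk V k = { u / x_k : u ∈ V, max(u) = k }` (here `k : Fin n` is the 0-indexed variable,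
corresponding to the 1-indexed variable `k+1`) -/
def Dk {n : ℕ} (V : Set (Mono n)) (k : Fin n) : Set (Mono n) :=
  {w | w + Finsupp.single k 1 ∈ V ∧ maxVar (w + Finsupp.single k 1) = (k : ℕ) + 1}

/-- `Mle j W = { u ∈ W : max(u) ≤ j }` -/
def Mle {n : ℕ} (j : ℕ) (W : Set (Mono n)) : Set (Mono n) := {u ∈ W | maxVar u ≤ j}

/-- `L` is a lexsegment set of monomials inside `K[x_1,…,x_k]`. -/
def LexSegIn {n : ℕ} (k : ℕ) (L : Set (Mono n)) : Prop :=
  (∀ u ∈ L, maxVar u ≤ k) ∧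
  ∀ u ∈ L, ∀ v : Mono n, mdeg v = mdeg u → maxVar v ≤ k → LexGT v u → v ∈ L

/-- `V` is a `d`-linear lexsegment set of monomials of degree `d`. -/
def DLinearLexSeg {n : ℕ} (d : ℕ) (V : Set (Mono n)) : Prop :=
  (∀ u ∈ V, mdeg u = d) ∧ SStableSet V ∧
    ∀ k : Fin n, LexSegIn ((k : ℕ) + 1) (Dk V k)

/-! ### Ideal-level notions -/

variable {n : ℕ} {K : Type} [Field K]

/-- `I` is a monomial ideal. -/
def MonomialIdeal (I : Ideal (MvPolynomial (Fin n) K)) : Prop :=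
  ∀ p ∈ I, ∀ m ∈ p.support, (monomial m (1 : K)) ∈ I

/-- `u` is a minimal monomial generator of the monomial ideal `I`. -/
def MinGen (I : Ideal (MvPolynomial (Fin n) K)) (u : Mono n) : Prop :=
  monomial u (1 : K) ∈ I ∧ ∀ v : Mono n, v ≤ u → v ≠ u → monomial v (1 : K) ∉ I

/-- stable monomial ideal -/
def StableIdeal (I : Ideal (MvPolynomial (Fin n) K)) : Prop :=
  MonomialIdeal I ∧
  ∀ u : Mono n, ∀ q : Fin n, maxVar u = (q : ℕ) + 1 → monomial u (1 : K) ∈ I →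
    ∀ p : Fin n, p < q →
      monomial (u - Finsupp.single q 1 + Finsupp.single p 1) (1 : K) ∈ I

/-- strongly stable monomial ideal -/
def SStableIdeal (I : Ideal (MvPolynomial (Fin n) K)) : Prop :=
  MonomialIdeal I ∧
  ∀ u : Mono n, ∀ q : Fin n, 0 < u q → monomial u (1 : K) ∈ I →
    ∀ p : Fin n, p < q →
      monomial (u - Finsupp.single q 1 + Finsupp.single p 1) (1 : K) ∈ I

/-- the set of (exponent vectors of) monomials of degree `k` lying in `I` -/
def monSlice (I : Ideal (MvPolynomial (Fin n) K)) (k : ℕ) : Set (Mono n) :=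
  {u | mdeg u = k ∧ monomial u (1 : K) ∈ I}

/-- homogeneous (graded) ideal -/
def HomIdeal (I : Ideal (MvPolynomial (Fin n) K)) : Prop :=
  ∀ p ∈ I, ∀ k : ℕ, homogeneousComponent k p ∈ I

/-! ### Graded components and Hilbert functions -/

/-- the degree-`z` homogeneous component of `I`, as a `K`-subspace -/
noncomputable def hComp (I : Ideal (MvPolynomial (Fin n) K)) (z : ℤ) :
    Submodule K (MvPolynomial (Fin n) K) :=
  if 0 ≤ z then
    (Submodule.restrictScalars K I) ⊓ homogeneousSubmodule (Fin n) K z.toNat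
  else ⊥

/-- Hilbert function `H(I,t)` of the ideal `I` -/
noncomputable def hfI (I : Ideal (MvPolynomial (Fin n) K)) (t : ℕ) : ℕ :=
  Module.finrank K (hComp I (t : ℤ))

/-- Hilbert function `H(S/I,t)` of the quotient `S/I` -/
noncomputable def hfQ (I : Ideal (MvPolynomial (Fin n) K)) (t : ℕ) : ℕ :=
  Module.finrank K
    (homogeneousSubmodule (Fin n) K t ⧸
      Submodule.comap (homogeneousSubmodule (Fin n) K t).subtype
        (Submodule.restrictScalars K I))

/-- squarefree exponent vector -/
def SqFree {n : ℕ} (u : Mono n) : Prop := ∀ i, u i ≤ 1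

/-- squarefree monomial ideal -/
def SqMonomialIdeal (I : Ideal (MvPolynomial (Fin n) K)) : Prop :=
  MonomialIdeal I ∧ ∀ u : Mono n, MinGen I u → SqFree u

/-- squarefree strongly stable ideal -/
def SqSStableIdeal (I : Ideal (MvPolynomial (Fin n) K)) : Prop :=
  SqMonomialIdeal I ∧
  ∀ u : Mono n, SqFree u → monomial u (1 : K) ∈ I →
    ∀ p q : Fin n, p < q → u q = 1 → u p = 0 →
      monomial (u - Finsupp.single q 1 + Finsupp.single p 1) (1 : K) ∈ I

/-- `PhiRel u w` : `w = Φ(u)` where `Φ` is the squarefree operation sending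
`x_{i_1}x_{i_2}⋯x_{i_d}` (with `i_1 ≤ ⋯ ≤ i_d`) to `x_{i_1}x_{i_2+1}⋯x_{i_d+d-1}`
(indices written 0-indexed below). -/
def PhiRel {n d : ℕ} (u : Mono n) (w : Mono (n + d - 1)) : Prop :=
  ∃ l : List ℕ, l.Chain' (· ≤ ·) ∧ l.length = d ∧ (∀ m ∈ l, m < n) ∧
    (∀ i : Fin n, u i = l.count (i : ℕ)) ∧
    (∀ i : Fin (n + d - 1),
      w i = (l.zipIdx.filter fun p => decide (p.2 + p.1 = (i : ℕ))).length)

/-- `d`-linear lexsegment ideal: generated by a `d`-linear lexsegment set of monomials of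
degree `d` -/
def DLinearLexIdeal (d : ℕ) (I : Ideal (MvPolynomial (Fin n) K)) : Prop :=
  MonomialIdeal I ∧ (∀ u : Mono n, MinGen I u → mdeg u = d) ∧
    DLinearLexSeg d (monSlice I d)

/-- `L` is a squarefree lexsegment set of monomials inside `K[x_1,…,x_k]` -/
def SqLexSegIn {n : ℕ} (k : ℕ) (L : Set (Mono n)) : Prop :=
  (∀ u ∈ L, SqFree u ∧ maxVar u ≤ k) ∧
  ∀ u ∈ L, ∀ v : Mono n, SqFree v → mdeg v = mdeg u → maxVar v ≤ k → LexGT v u → v ∈ L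

/-- `d`-linear squarefree lexsegment ideal: generated in degree `d`, squarefree strongly
stable, and each `D_k` of the generating set is squarefree lexsegment in
`K[x_1,…,x_{k-1}]`. -/
def DLinearSqLexIdeal (d : ℕ) (I : Ideal (MvPolynomial (Fin n) K)) : Prop :=
  SqSStableIdeal I ∧ (∀ u : Mono n, MinGen I u → mdeg u = d) ∧
    ∀ k : Fin n, SqLexSegIn ((k : ℕ)) (Dk (monSlice I d) k)


/-! ### Auxiliary list machinery -/


/-- Key counting lemma for the enumerate-filter expression in `PhiRel`. -/
lemma filt_key (l : List ℕ) (hl : l.Pairwise (· ≤ ·)) (k j : ℕ) :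
    ((l.zipIdx k).filter (fun p => decide (p.2 + p.1 = j))).length
      = if ∃ t : Fin l.length, k + t + l.get t = j then 1 else 0 := by
  induction l generalizing k with
  | nil => simp
  | cons a l ih =>
    have hpw : l.Pairwise (· ≤ ·) := hl.tail
    have hall : ∀ x ∈ l, a ≤ x := fun x hx => (List.pairwise_cons.1 hl).1 x hx
    rw [List.zipIdx_cons]
    by_cases hka : k + a = j
    · have h0 : ∀ t : Fin l.length, ¬ ((k+1) + t + l.get t = j) := by
        intro t ht
        have h2 := hall _ (List.get_mem l ⟨t.1, t.2⟩)
        rw [show l.get ⟨t.1, t.2⟩ = l.get t from rfl] at h2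
        omega
      rw [List.filter_cons_of_pos (by simpa using hka), List.length_cons,
        ih hpw (k+1), if_neg (by rintro ⟨t, ht⟩; exact h0 t ht),
        if_pos ⟨⟨0, Nat.succ_pos _⟩, by simpa using hka⟩]
    · rw [List.filter_cons_of_neg (by simpa using hka), ih hpw (k+1)]
      congr 1
      simp only [eq_iff_iff]
      constructor
      · rintro ⟨t, ht⟩
        refine ⟨t.succ, ?_⟩
        simp only [Fin.val_succ, List.get, Fin.eta]
        have : (a :: l).get t.succ = l.get t := rfl
        omega
      · rintro ⟨⟨tv, htv⟩, ht⟩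
        match tv, htv, ht with
        | 0, h, ht => exact absurd (by simpa using ht) hka
        | (tv+1), h, ht =>
          refine ⟨⟨tv, by simpa using h⟩, ?_⟩
          simp only [List.get, Fin.eta] at ht ⊢
          omega

lemma strictMono_get_add {l : List ℕ} (hl : l.Pairwise (· ≤ ·)) :
    ∀ s t : Fin l.length, s < t → (s : ℕ) + l.get s < (t : ℕ) + l.get t := by
  intro s t hst
  have := List.pairwise_iff_get.1 hl s t hst
  omega


variable {n d : ℕ}

/-- canonical sorted list of the variables (with multiplicity) of a monomial -/
def toL (u : Mono n) : List ℕ := (List.finRange n).flatMap fun i => List.replicate (u i) (i : ℕ)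

lemma toL_pairwise (u : Mono n) : (toL u).Pairwise (· ≤ ·) := by
  rw [toL, List.pairwise_flatMap]
  constructor
  · intro a _; exact List.pairwise_replicate.2 (Or.inr le_rfl)
  · have : (List.finRange n).Pairwise (· < ·) := by
      rw [List.pairwise_iff_get]
      intro i j hij
      simpa using hij
    refine this.imp_of_mem ?_
    intro a b _ _ hab x hx y hy
    rw [List.eq_of_mem_replicate hx, List.eq_of_mem_replicate hy]
    exact le_of_lt (by exact_mod_cast hab)

lemma toL_lt (u : Mono n) : ∀ m ∈ toL u, m < n := by
  intro m hm
  rw [toL, List.mem_flatMap] at hm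
  obtain ⟨i, _, hm⟩ := hm
  rw [List.eq_of_mem_replicate hm]
  exact i.2

lemma toL_count (u : Mono n) (i : Fin n) : (toL u).count (i : ℕ) = u i := by
  rw [toL, List.count_flatMap, ← List.ofFn_eq_map, List.sum_ofFn]
  have h : ∀ j : Fin n, (List.count (i:ℕ) ∘ fun i' : Fin n => List.replicate (u i') (i':ℕ)) j
      = if j = i then u j else 0 := by
    intro j
    simp only [Function.comp_apply, List.count_replicate]
    by_cases h : j = i
    · simp [h]
    · have hne : ¬ ((j:ℕ) == (i:ℕ)) = true := by
        simp only [beq_iff_eq, Fin.val_inj]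
        exact h
      simp [h, hne]
  rw [Finset.sum_congr rfl fun j _ => h j, Finset.sum_ite_eq' Finset.univ i (fun j => u j)]
  simp

lemma toL_length (u : Mono n) : (toL u).length = mdeg u := by
  rw [toL, List.length_flatMap, ← List.ofFn_eq_map, List.sum_ofFn,
    mdeg, Finsupp.sum_fintype _ _ (fun _ => rfl)]
  simp

lemma toL_eq_of (u : Mono n) (l : List ℕ) (hs : l.Pairwise (· ≤ ·))
    (hlt : ∀ m ∈ l, m < n) (hc : ∀ i : Fin n, u i = l.count (i : ℕ)) : l = toL u := by
  refine List.Perm.eq_of_pairwise' hs (toL_pairwise u) (List.perm_iff_count.2 ?_)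
  intro a
  by_cases ha : a < n
  · rw [toL_count u ⟨a, ha⟩, hc ⟨a, ha⟩]
  · rw [List.count_eq_zero.2 (fun hmem => ha (hlt a hmem)),
      List.count_eq_zero.2 (fun hmem => ha (toL_lt u a hmem))]

/-- the squarefree operation, as a function -/
noncomputable def phi (d : ℕ) (u : Mono n) : Mono (n + d - 1) :=
  Finsupp.equivFunOnFinite.symm fun i =>
    (((toL u).zipIdx.filter fun p => decide (p.2 + p.1 = (i : ℕ)))).length

lemma phi_apply (u : Mono n) (i : Fin (n + d - 1)) :
    phi d u i = if ∃ t : Fin (toL u).length, (t : ℕ) + (toL u).get t = (i : ℕ) then 1 else 0 := by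
  show (((toL u).zipIdx.filter fun p => decide (p.2 + p.1 = (i : ℕ)))).length = _
  rw [filt_key _ (toL_pairwise u) 0]
  simp

lemma phiRel_iff {u : Mono n} {w : Mono (n + d - 1)} :
    PhiRel u w ↔ mdeg u = d ∧ w = phi d u := by
  constructor
  · rintro ⟨l, hs, hlen, hlt, hc, hw⟩
    have hps : l.Pairwise (· ≤ ·) := List.isChain_iff_pairwise.1 hs
    have hl : l = toL u := toL_eq_of u l hps hlt hc
    have hd : mdeg u = d := by rw [← toL_length, ← hl, hlen]
    refine ⟨hd, ?_⟩
    ext i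
    rw [hw i, hl]
    rfl
  · rintro ⟨hd, rfl⟩
    refine ⟨toL u, List.isChain_iff_pairwise.2 (toL_pairwise u), by rw [toL_length, hd],
      toL_lt u, fun i => (toL_count u i).symm, fun i => rfl⟩

/-! ### Basic monomial lemmas -/

lemma mdeg_eq_sum (u : Mono n) : mdeg u = ∑ i, u i :=
  Finsupp.sum_fintype _ _ fun _ => rfl

lemma mdeg_add (u v : Mono n) : mdeg (u + v) = mdeg u + mdeg v := by
  simp [mdeg_eq_sum, Finset.sum_add_distrib]

lemma mdeg_single (q : Fin n) : mdeg (Finsupp.single q 1) = 1 := by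
  classical
  simp [mdeg_eq_sum, Finsupp.single_apply]

lemma eq_of_le_of_mdeg_le {u v : Mono n} (h : v ≤ u) (hd : mdeg u ≤ mdeg v) : v = u := by
  have hle : ∀ i, v i ≤ u i := Finsupp.le_def.1 h
  ext i
  by_contra hne
  have hlt : v i < u i := lt_of_le_of_ne (hle i) hne
  have : mdeg v < mdeg u := by
    rw [mdeg_eq_sum, mdeg_eq_sum]
    exact Finset.sum_lt_sum (fun j _ => hle j) ⟨i, Finset.mem_univ i, hlt⟩
  omega

lemma mdeg_lt_of_lt {u v : Mono n} (h : v ≤ u) (hne : v ≠ u) : mdeg v < mdeg u := by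
  have hle : mdeg v ≤ mdeg u := by
    rw [mdeg_eq_sum, mdeg_eq_sum]
    exact Finset.sum_le_sum fun i _ => Finsupp.le_def.1 h i
  rcases lt_or_eq_of_le hle with h' | h'
  · exact h'
  · exact absurd (eq_of_le_of_mdeg_le h (le_of_eq h'.symm)) hne

lemma maxVar_le_iff {u : Mono n} {k : ℕ} : maxVar u ≤ k ↔ ∀ i : Fin n, u i ≠ 0 → (i : ℕ) + 1 ≤ k := by
  rw [maxVar, Finset.sup_le_iff]
  constructor
  · intro h i hi; exact h i (Finsupp.mem_support_iff.2 hi)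
  · intro h i hi; exact h i (Finsupp.mem_support_iff.1 hi)

lemma le_maxVar {u : Mono n} {i : Fin n} (hi : u i ≠ 0) : (i : ℕ) + 1 ≤ maxVar u :=
  Finset.le_sup (f := fun i : Fin n => (i : ℕ) + 1) (Finsupp.mem_support_iff.2 hi)

/-! ### LexGT basics -/

lemma lexGT_irrefl (u : Mono n) : ¬ LexGT u u := by
  rintro ⟨i, h, -⟩; exact lt_irrefl _ h

lemma lexGT_asymm {u v : Mono n} (h : LexGT u v) : ¬ LexGT v u := by
  rintro ⟨i, hi, hj⟩
  obtain ⟨i', hi', hj'⟩ := h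
  rcases lt_trichotomy i i' with hc | hc | hc
  · have := hj' i hc; omega
  · subst hc; omega
  · have := hj i' hc; omega

lemma lexGT_total {u v : Mono n} (h : u ≠ v) : LexGT u v ∨ LexGT v u := by
  classical
  have hne : (Finset.univ.filter fun i : Fin n => u i ≠ v i).Nonempty := by
    by_contra hcon
    rw [Finset.not_nonempty_iff_eq_empty, Finset.filter_eq_empty_iff] at hcon
    exact h (Finsupp.ext fun i => by
      by_contra hne'
      exact hcon (Finset.mem_univ i) hne')
  set S := Finset.univ.filter fun i : Fin n => u i ≠ v i
  set i0 := S.min' hne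
  have hi0 : u i0 ≠ v i0 := (Finset.mem_filter.1 (S.min'_mem hne)).2
  have hmin : ∀ j : Fin n, j < i0 → u j = v j := by
    intro j hj
    by_contra hne'
    exact absurd (S.min'_le j (Finset.mem_filter.2 ⟨Finset.mem_univ j, hne'⟩)) (not_le.2 hj)
  rcases lt_or_gt_of_ne hi0 with h' | h'
  · exact Or.inr ⟨i0, h', fun j hj => (hmin j hj).symm⟩
  · exact Or.inl ⟨i0, h', hmin⟩

lemma lexGT_add_right {u v w : Mono n} : LexGT (u + w) (v + w) ↔ LexGT u v := by
  constructor <;> rintro ⟨i, h1, h2⟩ <;> refine ⟨i, ?_, fun j hj => ?_⟩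
  · simpa using h1
  · have := h2 j hj; simpa using this
  · simpa using h1
  · simp [h2 j hj]

/-! ### Structural properties of `phi` -/

lemma toL_get_lt (u : Mono n) (t : Fin (toL u).length) : (toL u).get t < n :=
  toL_lt u _ (List.get_mem _ _)

lemma toL_get_mono (u : Mono n) {s t : Fin (toL u).length} (h : (s : ℕ) ≤ (t : ℕ)) :
    (toL u).get s ≤ (toL u).get t := by
  rcases eq_or_lt_of_le h with h' | h'
  · rw [Fin.ext_iff.2 h']
  · exact List.pairwise_iff_get.1 (toL_pairwise u) s t h'

lemma mono_get_add (u : Mono n) {s t : Fin (toL u).length} (h : (s : ℕ) ≤ (t : ℕ)) :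
    (s : ℕ) + (toL u).get s ≤ (t : ℕ) + (toL u).get t :=
  Nat.add_le_add h (toL_get_mono u h)

lemma mem_toL_iff {u : Mono n} {m : ℕ} : m ∈ toL u ↔ ∃ h : m < n, u ⟨m, h⟩ ≠ 0 := by
  constructor
  · intro hm
    refine ⟨toL_lt u m hm, ?_⟩
    have := List.count_pos_iff.2 hm
    rw [show m = ((⟨m, toL_lt u m hm⟩ : Fin n) : ℕ) from rfl, toL_count] at this
    omega
  · rintro ⟨h, hne⟩
    have : 0 < (toL u).count ((⟨m, h⟩ : Fin n) : ℕ) := by rw [toL_count]; omega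
    exact List.count_pos_iff.1 this

lemma sqFree_phi (u : Mono n) : SqFree (phi d u) := by
  intro i
  rw [phi_apply]
  split <;> omega

lemma phi_ne_zero_iff {u : Mono n} {i : Fin (n + d - 1)} :
    phi d u i ≠ 0 ↔ ∃ t : Fin (toL u).length, (t : ℕ) + (toL u).get t = (i : ℕ) := by
  rw [phi_apply]
  split <;> simp_all

lemma get_add_lt {u : Mono n} (hu : mdeg u = d) (t : Fin (toL u).length) :
    (t : ℕ) + (toL u).get t < n + d - 1 := by
  have hlen : (toL u).length = d := by rw [toL_length, hu]
  have h1 := t.2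
  have h2 := toL_get_lt u t
  omega

lemma mdeg_phi {u : Mono n} (hu : mdeg u = d) : mdeg (phi d u) = d := by
  classical
  rw [mdeg_eq_sum]
  set e : Fin (toL u).length → Fin (n + d - 1) :=
    fun t => ⟨(t : ℕ) + (toL u).get t, get_add_lt hu t⟩ with he
  have hinj : Function.Injective e := by
    intro s t hst
    by_contra hne
    rcases lt_or_gt_of_ne (fun h : (s:ℕ) = (t:ℕ) => hne (Fin.ext h)) with h | h
    · have := strictMono_get_add (toL_pairwise u) s t h
      rw [Fin.ext_iff] at hst; simp only [he] at hst; omega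
    · have := strictMono_get_add (toL_pairwise u) t s h
      rw [Fin.ext_iff] at hst; simp only [he] at hst; omega
  have hval : ∀ i : Fin (n + d - 1),
      phi d u i = if i ∈ Finset.univ.image e then 1 else 0 := by
    intro i
    rw [phi_apply]
    congr 1
    simp only [eq_iff_iff, Finset.mem_image, Finset.mem_univ, true_and]
    constructor
    · rintro ⟨t, ht⟩; exact ⟨t, Fin.ext ht⟩
    · rintro ⟨t, ht⟩; exact ⟨t, by rw [← ht]⟩
  rw [Finset.sum_congr rfl fun i _ => hval i]
  rw [Finset.sum_ite_mem, Finset.univ_inter, Finset.sum_const, smul_eq_mul, mul_one,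
    Finset.card_image_of_injective _ hinj, Finset.card_univ, Fintype.card_fin,
    toL_length, hu]

lemma maxVar_eq_get_last {u : Mono n} (h : 0 < (toL u).length) :
    maxVar u = (toL u).get ⟨(toL u).length - 1, by omega⟩ + 1 := by
  set L := toL u with hL
  set T : Fin L.length := ⟨L.length - 1, by omega⟩ with hT
  have hTv : (T : ℕ) = L.length - 1 := rfl
  show maxVar u = L.get T + 1
  apply le_antisymm
  · rw [maxVar_le_iff]
    intro i hi
    have hmem : ((i : ℕ)) ∈ L := mem_toL_iff.2 ⟨i.2, by simpa using hi⟩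
    obtain ⟨s, hs⟩ := List.mem_iff_get.1 hmem
    have hle : L.get s ≤ L.get T := toL_get_mono u (by have := s.2; omega)
    omega
  · have hmem : L.get T ∈ L := List.get_mem _ _
    have hlt : L.get T < n := toL_lt u _ hmem
    have hne : u ⟨L.get T, hlt⟩ ≠ 0 := by
      obtain ⟨h', hne⟩ := mem_toL_iff.1 hmem
      exact hne
    have := le_maxVar hne
    simpa using this

lemma maxVar_phi {u : Mono n} (hu : mdeg u = d) (hd0 : 0 < d) :
    maxVar (phi d u) = maxVar u + (d - 1) := by
  have hlen : (toL u).length = d := by rw [toL_length, hu]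
  have h0 : 0 < (toL u).length := by omega
  set T : Fin (toL u).length := ⟨(toL u).length - 1, by omega⟩ with hT
  have hTv : (T : ℕ) = (toL u).length - 1 := rfl
  have hu' : maxVar u = (toL u).get T + 1 := maxVar_eq_get_last h0
  apply le_antisymm
  · rw [maxVar_le_iff]
    intro i hi
    obtain ⟨t, ht⟩ := phi_ne_zero_iff.1 hi
    have h1 : (t : ℕ) + (toL u).get t ≤ (T : ℕ) + (toL u).get T :=
      mono_get_add u (by have := t.2; omega)
    omega
  · have hne : phi d u ⟨(T : ℕ) + (toL u).get T, get_add_lt hu T⟩ ≠ 0 :=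
      phi_ne_zero_iff.2 ⟨T, rfl⟩
    have := le_maxVar hne
    simp only [Fin.val_mk] at this
    omega

/-! ### `phi` preserves the lexicographic order -/

lemma toL_inj {u u' : Mono n} (h : toL u = toL u') : u = u' := by
  ext i
  rw [← toL_count u i, ← toL_count u' i, h]

lemma lists_first_diff {L L' : List ℕ} (hlen : L.length = L'.length) (hne : L ≠ L') :
    ∃ t : ℕ, ∃ h1 : t < L.length, ∃ h2 : t < L'.length,
      (∀ s, ∀ hs1 : s < L.length, ∀ hs2 : s < L'.length, s < t →
        L.get ⟨s, hs1⟩ = L'.get ⟨s, hs2⟩) ∧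
      L.get ⟨t, h1⟩ ≠ L'.get ⟨t, h2⟩ := by
  classical
  have hex : ∃ t : ℕ, L[t]? ≠ L'[t]? := by
    by_contra hcon
    push_neg at hcon
    exact hne (List.ext_getElem? hcon)
  set t := Nat.find hex with ht
  have hdiff : L[t]? ≠ L'[t]? := Nat.find_spec hex
  have h1 : t < L.length := by
    by_contra hcon
    push_neg at hcon
    rw [List.getElem?_eq_none hcon, List.getElem?_eq_none (by omega : L'.length ≤ t)] at hdiff
    exact hdiff rfl
  have h2 : t < L'.length := by omega
  refine ⟨t, h1, h2, ?_, ?_⟩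
  · intro s hs1 hs2 hst
    have := Nat.find_min hex hst
    push_neg at this
    rw [List.getElem?_eq_getElem hs1, List.getElem?_eq_getElem hs2] at this
    simpa [List.get_eq_getElem] using Option.some_injective _ this
  · intro hcon
    rw [List.getElem?_eq_getElem h1, List.getElem?_eq_getElem h2] at hdiff
    exact hdiff (by simpa [List.get_eq_getElem] using congrArg some hcon)

lemma count_take_drop (x : ℕ) (L : List ℕ) (t : ℕ) :
    L.count x = (L.take t).count x + (L.drop t).count x := by
  conv_lhs => rw [← List.take_append_drop t L]
  exact List.count_append

lemma drop_ge {u : Mono n} {t : ℕ} (h1 : t < (toL u).length) :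
    ∀ y ∈ (toL u).drop t, (toL u).get ⟨t, h1⟩ ≤ y := by
  intro y hy
  obtain ⟨j, hj, hjy⟩ := List.mem_iff_getElem.1 hy
  rw [List.getElem_drop] at hjy
  rw [List.length_drop] at hj
  subst hjy
  have := toL_get_mono u (s := ⟨t, h1⟩) (t := ⟨t + j, by omega⟩) (Nat.le_add_right t j)
  simpa [List.get_eq_getElem] using this

lemma take_eq_of_prefix {L L' : List ℕ} {t : ℕ} (h1 : t < L.length) (h2 : t < L'.length)
    (hpre : ∀ s, ∀ hs1 : s < L.length, ∀ hs2 : s < L'.length, s < t →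
      L.get ⟨s, hs1⟩ = L'.get ⟨s, hs2⟩) : L.take t = L'.take t := by
  apply List.ext_getElem
  · rw [List.length_take, List.length_take]; omega
  · intro s hs1 hs2
    rw [List.getElem_take, List.getElem_take]
    have hs : s < t := by rw [List.length_take] at hs1; omega
    simpa [List.get_eq_getElem] using hpre s (by omega) (by omega) hs

lemma lexGT_of_firstdiff {u u' : Mono n} {t : ℕ}
    (h1 : t < (toL u).length) (h2 : t < (toL u').length)
    (hpre : ∀ s, ∀ hs1 : s < (toL u).length, ∀ hs2 : s < (toL u').length, s < t →
      (toL u).get ⟨s, hs1⟩ = (toL u').get ⟨s, hs2⟩)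
    (hlt : (toL u).get ⟨t, h1⟩ < (toL u').get ⟨t, h2⟩) : LexGT u u' := by
  have han : (toL u).get ⟨t, h1⟩ < n := toL_get_lt u _
  have htake : (toL u).take t = (toL u').take t := take_eq_of_prefix h1 h2 hpre
  refine ⟨⟨(toL u).get ⟨t, h1⟩, han⟩, ?_, ?_⟩
  · have hcu : u ⟨(toL u).get ⟨t, h1⟩, han⟩ = (toL u).count ((toL u).get ⟨t, h1⟩) :=
      (toL_count u _).symm
    have hcu' : u' ⟨(toL u).get ⟨t, h1⟩, han⟩ = (toL u').count ((toL u).get ⟨t, h1⟩) :=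
      (toL_count u' _).symm
    have hdropL : 1 ≤ ((toL u).drop t).count ((toL u).get ⟨t, h1⟩) := by
      have hm : (toL u).get ⟨t, h1⟩ ∈ (toL u).drop t := by
        have h0 : ((toL u).drop t)[0]'(by rw [List.length_drop]; omega)
            = (toL u).get ⟨t, h1⟩ := by
          rw [List.getElem_drop]; simp [List.get_eq_getElem]
        exact h0 ▸ List.getElem_mem _
      exact List.count_pos_iff.2 hm
    have hdropL' : ((toL u').drop t).count ((toL u).get ⟨t, h1⟩) = 0 := by
      rw [List.count_eq_zero]
      intro hmem
      have := drop_ge (u := u') h2 _ hmem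
      omega
    rw [hcu, hcu', count_take_drop _ (toL u) t, count_take_drop _ (toL u') t, htake, hdropL']
    omega
  · intro j hj
    rw [Fin.lt_def] at hj
    simp only [Fin.val_mk] at hj
    have hcu : u j = (toL u).count (j : ℕ) := (toL_count u j).symm
    have hcu' : u' j = (toL u').count (j : ℕ) := (toL_count u' j).symm
    have hdropL : ((toL u).drop t).count (j : ℕ) = 0 := by
      rw [List.count_eq_zero]
      intro hmem
      have := drop_ge (u := u) h1 _ hmem
      omega
    have hdropL' : ((toL u').drop t).count (j : ℕ) = 0 := by
      rw [List.count_eq_zero]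
      intro hmem
      have := drop_ge (u := u') h2 _ hmem
      omega
    rw [hcu, hcu', count_take_drop _ (toL u) t, count_take_drop _ (toL u') t, htake,
      hdropL, hdropL']

lemma lexGT_phi_of_firstdiff {u u' : Mono n} (hu : mdeg u = d) (hu' : mdeg u' = d) {t : ℕ}
    (h1 : t < (toL u).length) (h2 : t < (toL u').length)
    (hpre : ∀ s, ∀ hs1 : s < (toL u).length, ∀ hs2 : s < (toL u').length, s < t →
      (toL u).get ⟨s, hs1⟩ = (toL u').get ⟨s, hs2⟩)
    (hlt : (toL u).get ⟨t, h1⟩ < (toL u').get ⟨t, h2⟩) :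
    LexGT (phi d u) (phi d u') := by
  set a := (toL u).get ⟨t, h1⟩ with ha
  set b := (toL u').get ⟨t, h2⟩ with hb
  refine ⟨⟨t + a, get_add_lt hu ⟨t, h1⟩⟩, ?_, ?_⟩
  · have hval : phi d u ⟨t + a, get_add_lt hu ⟨t, h1⟩⟩ ≠ 0 := phi_ne_zero_iff.2 ⟨⟨t, h1⟩, rfl⟩
    have hval' : phi d u' ⟨t + a, get_add_lt hu ⟨t, h1⟩⟩ = 0 := by
      by_contra hcon
      obtain ⟨s, hs⟩ := phi_ne_zero_iff.1 hcon
      simp only [Fin.val_mk] at hs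
      rcases lt_or_ge (s : ℕ) t with h' | h'
      · -- s < t : s + L'.get s = s + L.get s < t + a
        have heq : (toL u').get s = (toL u).get ⟨s, by omega⟩ :=
          (hpre s (by omega) s.2 h').symm
        have := strictMono_get_add (toL_pairwise u) ⟨s, by omega⟩ ⟨t, h1⟩ h'
        simp only [Fin.val_mk] at this
        omega
      · have := mono_get_add (u := u') (s := ⟨t, h2⟩) (t := s) h'
        simp only [Fin.val_mk] at this
        omega
    omega
  · intro j hj
    rw [Fin.lt_def] at hj
    simp only [Fin.val_mk] at hj
    rw [phi_apply, phi_apply]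
    congr 1
    simp only [eq_iff_iff]
    constructor
    · rintro ⟨s, hs⟩
      have hst : (s : ℕ) < t := by
        by_contra h'
        push_neg at h'
        have := mono_get_add (u := u) (s := ⟨t, h1⟩) (t := s) h'
        simp only [Fin.val_mk] at this
        omega
      refine ⟨⟨(s : ℕ), by omega⟩, ?_⟩
      have heq := hpre s s.2 (by omega) hst
      simp only [Fin.val_mk]
      rw [← heq]
      simpa using hs
    · rintro ⟨s, hs⟩
      have hst : (s : ℕ) < t := by
        by_contra h'
        push_neg at h'
        have := mono_get_add (u := u') (s := ⟨t, h2⟩) (t := s) h'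
        simp only [Fin.val_mk] at this
        omega
      refine ⟨⟨(s : ℕ), by omega⟩, ?_⟩
      have heq := hpre s (by omega) s.2 hst
      simp only [Fin.val_mk]
      rw [heq]
      simpa using hs

lemma lexGT_phi_forward {u u' : Mono n} (hu : mdeg u = d) (hu' : mdeg u' = d)
    (h : LexGT u u') : LexGT (phi d u) (phi d u') := by
  have hne : u ≠ u' := fun heq => lexGT_irrefl u' (heq ▸ h)
  have hLne : toL u ≠ toL u' := fun heq => hne (toL_inj heq)
  have hlen : (toL u).length = (toL u').length := by rw [toL_length, toL_length, hu, hu']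
  obtain ⟨t, h1, h2, hpre, hdiff⟩ := lists_first_diff hlen hLne
  rcases lt_or_gt_of_ne hdiff with hlt | hgt
  · exact lexGT_phi_of_firstdiff hu hu' h1 h2 hpre hlt
  · exact absurd (lexGT_of_firstdiff h2 h1
      (fun s hs1 hs2 hst => (hpre s hs2 hs1 hst).symm) hgt) (lexGT_asymm h)

lemma lexGT_phi_iff {u u' : Mono n} (hu : mdeg u = d) (hu' : mdeg u' = d) :
    LexGT (phi d u) (phi d u') ↔ LexGT u u' := by
  constructor
  · intro h
    by_contra hcon
    rcases eq_or_ne u u' with heq | hne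
    · exact lexGT_irrefl _ (heq ▸ h)
    · rcases lexGT_total hne with h' | h'
      · exact hcon h'
      · exact lexGT_asymm h (lexGT_phi_forward hu' hu h')
  · exact lexGT_phi_forward hu hu'

lemma phi_inj {u u' : Mono n} (hu : mdeg u = d) (hu' : mdeg u' = d)
    (h : phi d u = phi d u') : u = u' := by
  by_contra hne
  rcases lexGT_total hne with h' | h'
  · exact lexGT_irrefl _ (h ▸ lexGT_phi_forward hu hu' h')
  · exact lexGT_irrefl _ (h ▸ lexGT_phi_forward hu' hu h')

/-! ### exchange moves and `phi` -/

lemma move_apply {N : ℕ} {u : Mono N} {p q : Fin N} (i : Fin N) :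
    ((u - Finsupp.single q 1 + Finsupp.single p 1 : Mono N)) i
      = u i - (if q = i then 1 else 0) + (if p = i then 1 else 0) := by
  classical
  rw [Finsupp.add_apply, Finsupp.tsub_apply, Finsupp.single_apply, Finsupp.single_apply]

lemma move_add_cancel {N : ℕ} {u : Mono N} {p q : Fin N} (hq : u q ≠ 0) (hpq : p ≠ q) :
    ((u - Finsupp.single q 1 + Finsupp.single p 1 : Mono N)) + Finsupp.single q 1
      = u + Finsupp.single p 1 := by
  classical
  ext i
  simp only [Finsupp.coe_add, Pi.add_apply, Finsupp.tsub_apply, Finsupp.single_apply]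
  rcases eq_or_ne q i with h1 | h1
  · subst h1
    rw [if_pos rfl, if_neg (fun h : p = q => hpq h)]
    omega
  · rw [if_neg h1]
    split_ifs <;> omega

lemma mdeg_move {N : ℕ} {u : Mono N} {p q : Fin N} (hq : u q ≠ 0) (hpq : p ≠ q) :
    mdeg ((u - Finsupp.single q 1 + Finsupp.single p 1 : Mono N)) = mdeg u := by
  have h := congrArg mdeg (move_add_cancel hq hpq)
  rw [mdeg_add (u - Finsupp.single q 1 + Finsupp.single p 1) (Finsupp.single q 1),
    mdeg_add u (Finsupp.single p 1), mdeg_single, mdeg_single] at h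
  omega

lemma fin_ne_of_adj {N : ℕ} {p q : Fin N} (hpq : (p : ℕ) + 1 = (q : ℕ)) : p ≠ q := by
  intro h; rw [h] at hpq; omega

lemma toL_set_move {u : Mono n} {p q : Fin n} (hpq : (p : ℕ) + 1 = (q : ℕ))
    {t0 : ℕ} (ht0 : t0 < (toL u).length) (hget : (toL u).get ⟨t0, ht0⟩ = (q : ℕ))
    (hbef : ∀ s, ∀ hs : s < (toL u).length, s < t0 → (toL u).get ⟨s, hs⟩ < (q : ℕ)) :
    toL (u - Finsupp.single q 1 + Finsupp.single p 1) = (toL u).set t0 (p : ℕ) := by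
  classical
  refine (toL_eq_of _ _ ?_ ?_ ?_).symm
  · -- pairwise
    rw [List.pairwise_iff_get]
    intro a b hab
    have hlen : ((toL u).set t0 (p : ℕ)).length = (toL u).length := List.length_set
    have hga : ((toL u).set t0 (p:ℕ)).get a = if t0 = (a:ℕ) then (p:ℕ) else (toL u).get ⟨a, by omega⟩ := by
      rw [List.get_eq_getElem, List.getElem_set]
      split <;> simp [List.get_eq_getElem]
    have hgb : ((toL u).set t0 (p:ℕ)).get b = if t0 = (b:ℕ) then (p:ℕ) else (toL u).get ⟨b, by omega⟩ := by
      rw [List.get_eq_getElem, List.getElem_set]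
      split <;> simp [List.get_eq_getElem]
    rw [hga, hgb]
    have hab' : (a : ℕ) < (b : ℕ) := hab
    split_ifs with h1 h2 h2
    · omega
    · -- a = t0, b ≠ t0 : p ≤ get b  since get b ≥ get t0 = q > p
      have := toL_get_mono u (s := ⟨t0, ht0⟩) (t := ⟨b, by omega⟩)
        (show t0 ≤ (b : ℕ) from by omega)
      omega
    · -- b = t0, a < t0 : get a < q = p+1 so get a ≤ p
      have := hbef a (by omega) (by omega)
      omega
    · exact toL_get_mono u (s := ⟨a, by omega⟩) (t := ⟨b, by omega⟩)
        (show (a : ℕ) ≤ (b : ℕ) from le_of_lt hab')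
  · -- entries < n
    intro m hm
    obtain ⟨k, hk, hkm⟩ := List.mem_iff_getElem.1 hm
    rw [List.getElem_set] at hkm
    rw [List.length_set] at hk
    split at hkm
    · subst hkm; exact p.2
    · subst hkm
      exact toL_get_lt u ⟨k, hk⟩
  · -- counts
    intro i
    have hsplitL : toL u = (toL u).take t0 ++ (q : ℕ) :: (toL u).drop (t0 + 1) := by
      conv_lhs => rw [← List.take_append_drop t0 (toL u), List.drop_eq_getElem_cons ht0]
      rw [← hget]
      simp [List.get_eq_getElem]
    have hsplitS : (toL u).set t0 (p : ℕ)
        = (toL u).take t0 ++ (p : ℕ) :: (toL u).drop (t0 + 1) := by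
      rw [List.set_eq_take_append_cons_drop, if_pos ht0]
    have hcount : u i = ((toL u).take t0).count (i:ℕ) + ((toL u).drop (t0+1)).count (i:ℕ)
        + (if (q:ℕ) = (i:ℕ) then 1 else 0) := by
      conv_lhs => rw [← toL_count u i]
      conv_lhs => rw [hsplitL]
      rw [List.count_append, List.count_cons]
      simp only [beq_iff_eq]
      split_ifs <;> omega
    rw [move_apply, hsplitS, List.count_append, List.count_cons]
    simp only [beq_iff_eq]
    rw [hcount]
    simp only [Fin.ext_iff]
    split_ifs <;> omega

lemma phi_move_core {u : Mono n} (hu : mdeg u = d) {p q : Fin n}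
    (hpq : (p : ℕ) + 1 = (q : ℕ))
    {t0 : ℕ} (ht0 : t0 < (toL u).length) (hget : (toL u).get ⟨t0, ht0⟩ = (q : ℕ))
    (hbef : ∀ s, ∀ hs : s < (toL u).length, s < t0 → (toL u).get ⟨s, hs⟩ < (q : ℕ)) :
    ∃ j j' : Fin (n + d - 1), (j' : ℕ) + 1 = (j : ℕ) ∧ (j : ℕ) = t0 + (q : ℕ) ∧
      phi d u j ≠ 0 ∧ phi d u j' = 0 ∧
      phi d (u - Finsupp.single q 1 + Finsupp.single p 1)
        = phi d u - Finsupp.single j 1 + Finsupp.single j' 1 := by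
  classical
  have hjlt : t0 + (q : ℕ) < n + d - 1 := by
    have := get_add_lt hu ⟨t0, ht0⟩
    rw [hget] at this
    exact this
  set j : Fin (n + d - 1) := ⟨t0 + q, hjlt⟩ with hj
  set j' : Fin (n + d - 1) := ⟨t0 + p, by omega⟩ with hj'
  have hphij : phi d u j ≠ 0 := phi_ne_zero_iff.2 ⟨⟨t0, ht0⟩, by rw [hget]⟩
  have hphij' : phi d u j' = 0 := by
    by_contra hcon
    obtain ⟨s, hs⟩ := phi_ne_zero_iff.1 hcon
    have hsv : (s : ℕ) + (toL u).get s = t0 + (p : ℕ) := hs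
    rcases lt_trichotomy (s : ℕ) t0 with h' | h' | h'
    · have hb := hbef s s.2 h'
      rw [show (⟨(s:ℕ), s.2⟩ : Fin (toL u).length) = s from Fin.ext rfl] at hb
      omega
    · have : (toL u).get s = (toL u).get ⟨t0, ht0⟩ := by congr 1; exact Fin.ext h'
      omega
    · have := mono_get_add (u := u) (s := ⟨t0, ht0⟩) (t := s) (le_of_lt h')
      simp only [Fin.val_mk] at this
      omega
  refine ⟨j, j', by simp [hj, hj']; omega, rfl, hphij, hphij', ?_⟩
  have hset := toL_set_move hpq ht0 hget hbef
  have hlenset : (toL (u - Finsupp.single q 1 + Finsupp.single p 1)).length = (toL u).length := by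
    rw [hset, List.length_set]
  have hgetset : ∀ s : Fin (toL (u - Finsupp.single q 1 + Finsupp.single p 1)).length,
      (toL (u - Finsupp.single q 1 + Finsupp.single p 1)).get s
        = if t0 = (s : ℕ) then (p : ℕ) else (toL u).get ⟨(s : ℕ), hlenset ▸ s.2⟩ := by
    intro s
    obtain ⟨sv, hsv⟩ := s
    have hs : sv < (toL u).length := hlenset ▸ hsv
    have h1 : (toL (u - Finsupp.single q 1 + Finsupp.single p 1))[sv]?
        = ((toL u).set t0 (p : ℕ))[sv]? := by rw [hset]
    rw [List.getElem?_eq_getElem hsv,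
      List.getElem?_eq_getElem (by rw [List.length_set]; exact hs)] at h1
    rw [List.get_eq_getElem, Option.some_injective _ h1, List.getElem_set]
    split <;> simp [List.get_eq_getElem]
  ext i
  rw [move_apply, phi_apply, phi_apply]
  have hpj' : (j' : ℕ) = t0 + (p : ℕ) := rfl
  have hqj : (j : ℕ) = t0 + (q : ℕ) := rfl
  by_cases hiq : (i : ℕ) = t0 + (q : ℕ)
  · have hL : ¬ ∃ t : Fin (toL (u - Finsupp.single q 1 + Finsupp.single p 1)).length,
        (t:ℕ) + (toL (u - Finsupp.single q 1 + Finsupp.single p 1)).get t = (i : ℕ) := by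
      rintro ⟨s, hs⟩
      rw [hgetset s] at hs
      by_cases hts : t0 = (s : ℕ)
      · rw [if_pos hts] at hs
        omega
      · rw [if_neg hts] at hs
        rcases lt_or_gt_of_ne (Ne.symm hts) with h' | h'
        · have := strictMono_get_add (toL_pairwise u) ⟨(s:ℕ), hlenset ▸ s.2⟩ ⟨t0, ht0⟩ h'
          simp only [Fin.val_mk] at this
          omega
        · have := strictMono_get_add (toL_pairwise u) ⟨t0, ht0⟩ ⟨(s:ℕ), hlenset ▸ s.2⟩ h'
          simp only [Fin.val_mk] at this
          omega
    have hR1 : ∃ t : Fin (toL u).length, (t:ℕ) + (toL u).get t = (i : ℕ) :=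
      ⟨⟨t0, ht0⟩, show t0 + (toL u).get ⟨t0, ht0⟩ = (i:ℕ) by rw [hget]; omega⟩
    rw [if_neg hL, if_pos hR1, if_pos (Fin.ext (show (j:ℕ) = (i:ℕ) by rw [hqj]; omega) : j = i),
      if_neg (by intro h; rw [Fin.ext_iff, hpj'] at h; omega : ¬ j' = i)]
  · by_cases hip : (i : ℕ) = t0 + (p : ℕ)
    · have hL : ∃ t : Fin (toL (u - Finsupp.single q 1 + Finsupp.single p 1)).length,
          (t:ℕ) + (toL (u - Finsupp.single q 1 + Finsupp.single p 1)).get t = (i : ℕ) := by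
        refine ⟨⟨t0, by omega⟩, ?_⟩
        rw [hgetset ⟨t0, by omega⟩, if_pos rfl]
        show t0 + (p:ℕ) = (i:ℕ)
        omega
      have hR0 : ¬ ∃ t : Fin (toL u).length, (t:ℕ) + (toL u).get t = (i : ℕ) := by
        rintro ⟨s, hs⟩
        exact (phi_ne_zero_iff.2 ⟨s, by rw [hpj']; omega⟩) hphij'
      rw [if_pos hL, if_neg hR0, if_neg (by
        intro h; rw [Fin.ext_iff, hqj] at h; omega : ¬ j = i),
        if_pos (Fin.ext (show (j':ℕ) = (i:ℕ) by rw [hpj']; omega) : j' = i)]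
    · have hiff : (∃ t : Fin (toL (u - Finsupp.single q 1 + Finsupp.single p 1)).length,
          (t:ℕ) + (toL (u - Finsupp.single q 1 + Finsupp.single p 1)).get t = (i : ℕ))
          ↔ (∃ t : Fin (toL u).length, (t:ℕ) + (toL u).get t = (i : ℕ)) := by
        constructor
        · rintro ⟨s, hs⟩
          rw [hgetset s] at hs
          by_cases hts : t0 = (s : ℕ)
          · rw [if_pos hts] at hs
            omega
          · rw [if_neg hts] at hs
            exact ⟨⟨(s:ℕ), hlenset ▸ s.2⟩, hs⟩
        · rintro ⟨s, hs⟩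
          have hst0 : (s : ℕ) ≠ t0 := by
            intro h
            have hgs : (toL u).get s = (toL u).get ⟨t0, ht0⟩ := by congr 1; exact Fin.ext h
            rw [hgs, hget] at hs
            omega
          refine ⟨⟨(s:ℕ), by omega⟩, ?_⟩
          rw [hgetset ⟨(s:ℕ), by omega⟩, if_neg (by simpa using fun h => hst0 h.symm)]
          show (s:ℕ) + (toL u).get s = (i:ℕ)
          exact hs
      rw [if_congr hiff rfl rfl, if_neg (by
        intro h; rw [Fin.ext_iff, hqj] at h; omega : ¬ j = i), if_neg (by
        intro h; rw [Fin.ext_iff, hpj'] at h; omega : ¬ j' = i)]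
      omega

lemma phi_move {u : Mono n} (hu : mdeg u = d) {p q : Fin n}
    (hpq : (p : ℕ) + 1 = (q : ℕ)) (hq : u q ≠ 0) :
    ∃ j j' : Fin (n + d - 1), (j' : ℕ) + 1 = (j : ℕ) ∧ phi d u j ≠ 0 ∧ phi d u j' = 0 ∧
      phi d (u - Finsupp.single q 1 + Finsupp.single p 1)
        = phi d u - Finsupp.single j 1 + Finsupp.single j' 1 := by
  classical
  have hmem : ((q : ℕ)) ∈ toL u := mem_toL_iff.2 ⟨q.2, by simpa using hq⟩
  have hex : ∃ t : ℕ, (toL u)[t]? = some ((q : ℕ)) := by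
    obtain ⟨t, ht, hgt⟩ := List.mem_iff_getElem.1 hmem
    exact ⟨t, by rw [List.getElem?_eq_getElem ht, hgt]⟩
  obtain ⟨ht0, hget0⟩ := List.getElem?_eq_some_iff.1 (Nat.find_spec hex)
  have hget : (toL u).get ⟨Nat.find hex, ht0⟩ = (q : ℕ) := by
    simpa [List.get_eq_getElem] using hget0
  have hbef : ∀ s, ∀ hs : s < (toL u).length, s < Nat.find hex →
      (toL u).get ⟨s, hs⟩ < (q : ℕ) := by
    intro s hs hst
    have hne := Nat.find_min hex hst
    have hne' : (toL u).get ⟨s, hs⟩ ≠ (q : ℕ) := by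
      intro h
      apply hne
      rw [List.getElem?_eq_getElem hs]
      exact congrArg some (by rw [← h, List.get_eq_getElem])
    have hle : (toL u).get ⟨s, hs⟩ ≤ (toL u).get ⟨Nat.find hex, ht0⟩ :=
      toL_get_mono u (le_of_lt hst)
    rw [hget] at hle
    exact lt_of_le_of_ne hle hne'
  obtain ⟨j, j', hadj, _, h1, h2, h3⟩ := phi_move_core hu hpq ht0 hget hbef
  exact ⟨j, j', hadj, h1, h2, h3⟩

lemma phi_move_rev {u : Mono n} (hu : mdeg u = d) {j j' : Fin (n + d - 1)}
    (hjj : (j' : ℕ) + 1 = (j : ℕ)) (hj : phi d u j ≠ 0) (hj' : phi d u j' = 0) :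
    ∃ p q : Fin n, (p : ℕ) + 1 = (q : ℕ) ∧ u q ≠ 0 ∧
      phi d (u - Finsupp.single q 1 + Finsupp.single p 1)
        = phi d u - Finsupp.single j 1 + Finsupp.single j' 1 := by
  obtain ⟨t, ht⟩ := phi_ne_zero_iff.1 hj
  have hbef0 : ∀ s, ∀ hs : s < (toL u).length, s < (t : ℕ) →
      (toL u).get ⟨s, hs⟩ < (toL u).get t := by
    intro s hs hst
    have h0 : (t : ℕ) - 1 < (toL u).length := by omega
    set tp : Fin (toL u).length := ⟨(t : ℕ) - 1, h0⟩ with htp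
    have hle1 : (toL u).get tp ≤ (toL u).get t :=
      toL_get_mono u (show (t : ℕ) - 1 ≤ (t : ℕ) from by omega)
    have hlt1 : (toL u).get tp < (toL u).get t := by
      rcases lt_or_eq_of_le hle1 with h' | h'
      · exact h'
      · exfalso
        refine phi_ne_zero_iff.2 ⟨tp, ?_⟩ hj'
        show (tp : ℕ) + (toL u).get tp = (j' : ℕ)
        rw [h']
        show (t : ℕ) - 1 + (toL u).get t = (j' : ℕ)
        omega
    have hle2 : (toL u).get ⟨s, hs⟩ ≤ (toL u).get tp :=
      toL_get_mono u (show s ≤ (t : ℕ) - 1 from by omega)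
    omega
  have hq1 : 1 ≤ (toL u).get t := by
    rcases Nat.eq_zero_or_pos ((t : ℕ)) with h0 | hpos
    · -- t = 0 : get t = j ≥ 1
      omega
    · have := hbef0 ((t : ℕ) - 1) (by omega) (by omega)
      omega
  have hqn : (toL u).get t < n := toL_get_lt u t
  refine ⟨⟨(toL u).get t - 1, by omega⟩, ⟨(toL u).get t, hqn⟩,
    show (toL u).get t - 1 + 1 = (toL u).get t from by omega, ?_, ?_⟩
  · -- u q ≠ 0
    obtain ⟨hlt, hne⟩ := mem_toL_iff.1 (List.get_mem (toL u) t)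
    exact hne
  · obtain ⟨j0, j0', hadj, hval, _, _, heq⟩ :=
      phi_move_core hu (p := ⟨(toL u).get t - 1, by omega⟩) (q := ⟨(toL u).get t, hqn⟩)
        (show (toL u).get t - 1 + 1 = (toL u).get t from by omega) t.2
        (show (toL u).get ⟨(t : ℕ), t.2⟩ = _ from rfl)
        (fun s hs hst => hbef0 s hs hst)
    have hj0 : j0 = j := Fin.ext (by rw [hval]; simpa using ht)
    have hj0' : j0' = j' := Fin.ext (by simp at hval ⊢; omega)
    rw [hj0, hj0'] at heq
    exact heq

/-! ### surjectivity of `phi` -/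

lemma mdeg_sqfree_card {N : ℕ} {w : Mono N} (hsq : SqFree w) : mdeg w = w.support.card := by
  have h1 : mdeg w = ∑ i ∈ w.support, w i := rfl
  rw [h1, Finset.card_eq_sum_ones]
  refine Finset.sum_congr rfl fun i hi => ?_
  have h2 := hsq i
  have h3 := Finsupp.mem_support_iff.1 hi
  omega

lemma phi_surj (hn : 0 < n) (hd0 : 0 < d) {w : Mono (n + d - 1)}
    (hsq : SqFree w) (hw : mdeg w = d) :
    ∃ u : Mono n, mdeg u = d ∧ phi d u = w := by
  classical
  set s : List ℕ := (w.support.sort (· ≤ ·)).map Fin.val with hs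
  have hslen : s.length = d := by
    rw [hs, List.length_map, Finset.length_sort, ← mdeg_sqfree_card hsq, hw]
  have hssort : s.Pairwise (· < ·) := by
    rw [hs, List.pairwise_map]
    exact (Finset.sortedLT_sort w.support).pairwise.imp (fun h => by exact_mod_cast h)
  have hsmem : ∀ m ∈ s, m < n + d - 1 := by
    intro m hm
    rw [hs, List.mem_map] at hm
    obtain ⟨i, _, rfl⟩ := hm
    exact i.2
  have hmem_iff : ∀ i : Fin (n + d - 1), (i : ℕ) ∈ s ↔ w i ≠ 0 := by
    intro i
    rw [hs, List.mem_map]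
    constructor
    · rintro ⟨i', hi', h⟩
      have : i' = i := Fin.ext h
      subst this
      exact Finsupp.mem_support_iff.1 ((Finset.mem_sort _).1 hi')
    · intro h
      exact ⟨i, (Finset.mem_sort _).2 (Finsupp.mem_support_iff.2 h), rfl⟩
  have hgap : ∀ k : ℕ, ∀ a b : Fin s.length, (b : ℕ) = (a : ℕ) + k →
      s.get a + k ≤ s.get b := by
    intro k
    induction k with
    | zero =>
      intro a b h
      have hab : a = b := Fin.ext (by omega)
      rw [hab]
      omega
    | succ k ih =>
      intro a b h
      have hb1 : (b : ℕ) - 1 < s.length := by have := b.2; omega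
      have h1 := ih a ⟨(b : ℕ) - 1, hb1⟩ (show ((b:ℕ) - 1) = (a : ℕ) + k from by omega)
      have h2 : s.get ⟨(b : ℕ) - 1, hb1⟩ < s.get b :=
        List.pairwise_iff_get.1 hssort _ _ (show ((b:ℕ) - 1) < (b : ℕ) from by omega)
      omega
  have hget_ge : ∀ t : ℕ, ∀ ht : t < s.length, t ≤ s.get ⟨t, ht⟩ := by
    intro t ht
    have h0 : (0 : ℕ) < s.length := by omega
    have := hgap t ⟨0, h0⟩ ⟨t, ht⟩ (show t = 0 + t from by omega)
    omega
  have hget_ub : ∀ t : ℕ, ∀ ht : t < s.length, s.get ⟨t, ht⟩ < n + t := by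
    intro t ht
    have hlast : s.length - 1 < s.length := by omega
    have h1 := hgap (s.length - 1 - t) ⟨t, ht⟩ ⟨s.length - 1, hlast⟩
      (show s.length - 1 = t + (s.length - 1 - t) from by omega)
    have h2 : s.get ⟨s.length - 1, hlast⟩ < n + d - 1 :=
      hsmem _ (List.get_mem _ _)
    omega
  -- the list of variables of the preimage
  set l : List ℕ := s.zipIdx.map (fun p => p.1 - p.2) with hl
  have hllen : l.length = s.length := by rw [hl, List.length_map, List.length_zipIdx]
  have hlget : ∀ t : ℕ, ∀ ht : t < l.length, ∀ hts : t < s.length,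
      l.get ⟨t, ht⟩ = s.get ⟨t, hts⟩ - t := by
    intro t ht hts
    show (List.map (fun p => p.1 - p.2) s.zipIdx).get ⟨t, ht⟩ = _
    rw [List.get_eq_getElem, List.getElem_map, List.getElem_zipIdx]
    simp [List.get_eq_getElem]
  have hlpw : l.Pairwise (· ≤ ·) := by
    rw [List.pairwise_iff_get]
    intro a b hab
    have hab' : (a : ℕ) < (b : ℕ) := hab
    have has : (a : ℕ) < s.length := by have := a.2; omega
    have hbs : (b : ℕ) < s.length := by have := b.2; omega
    have hga : l.get a = s.get ⟨(a : ℕ), has⟩ - (a : ℕ) := hlget (a : ℕ) a.2 has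
    have hgb : l.get b = s.get ⟨(b : ℕ), hbs⟩ - (b : ℕ) := hlget (b : ℕ) b.2 hbs
    have h1 := hgap ((b : ℕ) - (a : ℕ)) ⟨(a : ℕ), has⟩ ⟨(b : ℕ), hbs⟩
      (show (b : ℕ) = (a : ℕ) + ((b : ℕ) - (a : ℕ)) from by omega)
    have h2 := hget_ge (a : ℕ) has
    omega
  have hllt : ∀ m ∈ l, m < n := by
    intro m hm
    obtain ⟨t, ht⟩ := List.mem_iff_get.1 hm
    have hts : (t : ℕ) < s.length := by have := t.2; omega
    have hg : l.get t = s.get ⟨(t : ℕ), hts⟩ - (t : ℕ) := hlget (t : ℕ) t.2 hts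
    have h1 := hget_ub (t : ℕ) hts
    have h2 := hget_ge (t : ℕ) hts
    omega
  set u : Mono n := Finsupp.equivFunOnFinite.symm (fun i : Fin n => l.count (i : ℕ)) with hu
  have hcount : ∀ i : Fin n, u i = l.count (i : ℕ) := fun i => rfl
  have htoL : l = toL u := toL_eq_of u l hlpw hllt hcount
  have hmdeg : mdeg u = d := by rw [← toL_length, ← htoL, hllen, hslen]
  refine ⟨u, hmdeg, ?_⟩
  have hlenlt : (toL u).length = l.length := by rw [← htoL]
  ext i
  rw [phi_apply]
  have hcond : (∃ t : Fin (toL u).length, (t : ℕ) + (toL u).get t = (i : ℕ)) ↔ w i ≠ 0 := by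
    rw [← hmem_iff i]
    constructor
    · rintro ⟨t, ht⟩
      have ht2 : (t : ℕ) < l.length := by have := t.2; omega
      have hts : (t : ℕ) < s.length := by omega
      have hgt : (toL u).get t = l.get ⟨(t : ℕ), ht2⟩ := by
        congr 1
        · exact htoL.symm
        · exact (Fin.heq_ext_iff (by rw [← htoL])).2 rfl
      have hlg : l.get ⟨(t : ℕ), ht2⟩ = s.get ⟨(t : ℕ), hts⟩ - (t : ℕ) :=
        hlget (t : ℕ) ht2 hts
      have hge := hget_ge (t : ℕ) hts
      have : s.get ⟨(t : ℕ), hts⟩ = (i : ℕ) := by omega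
      rw [← this]
      exact List.get_mem _ _
    · intro hmem
      obtain ⟨t, ht⟩ := List.mem_iff_get.1 hmem
      have htl : (t : ℕ) < l.length := by have := t.2; omega
      have htu : (t : ℕ) < (toL u).length := by omega
      refine ⟨⟨(t : ℕ), htu⟩, ?_⟩
      have hgt : (toL u).get ⟨(t : ℕ), htu⟩ = l.get ⟨(t : ℕ), htl⟩ := by
        congr 1
        · exact htoL.symm
        · exact (Fin.heq_ext_iff (by rw [← htoL])).2 rfl
      have hts : (t : ℕ) < s.length := t.2
      have hlg : l.get ⟨(t : ℕ), htl⟩ = s.get ⟨(t : ℕ), hts⟩ - (t : ℕ) :=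
        hlget (t : ℕ) htl hts
      have hge := hget_ge (t : ℕ) hts
      have hgeq : s.get ⟨(t : ℕ), hts⟩ = s.get t := rfl
      simp only [Fin.val_mk]
      omega
  split_ifs with h
  · have h1 := hcond.1 h
    have h2 := hsq i
    omega
  · have : ¬ w i ≠ 0 := fun hc => h (hcond.2 hc)
    omega

/-! ### ideal-level lemmas -/

lemma mono_mem_span {N : ℕ} {G : Set (Mono N)} {m : Mono N} :
    (monomial m (1 : K)) ∈ Ideal.span ((fun w => monomial w (1 : K)) '' G) ↔
      ∃ g ∈ G, g ≤ m := by
  classical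
  rw [MvPolynomial.mem_ideal_span_monomial_image]
  constructor
  · intro h
    exact h m (by simp [MvPolynomial.support_monomial])
  · intro h m' hm'
    rw [MvPolynomial.support_monomial, if_neg (one_ne_zero : (1:K) ≠ 0)] at hm'
    rw [Finset.mem_singleton] at hm'
    subst hm'
    exact h

lemma monomialIdeal_span {N : ℕ} (G : Set (Mono N)) :
    MonomialIdeal (Ideal.span ((fun w => monomial w (1 : K)) '' G)) := by
  classical
  intro p hp m hm
  rw [MvPolynomial.mem_ideal_span_monomial_image] at hp ⊢
  intro m' hm'
  rw [MvPolynomial.support_monomial, if_neg (one_ne_zero : (1:K) ≠ 0),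
    Finset.mem_singleton] at hm'
  exact hm' ▸ hp m hm

lemma mdeg_mono {N : ℕ} {a b : Mono N} (h : a ≤ b) : mdeg a ≤ mdeg b := by
  rw [mdeg_eq_sum, mdeg_eq_sum]
  exact Finset.sum_le_sum fun i _ => Finsupp.le_def.1 h i

lemma exists_minGen_le {N : ℕ} {I : Ideal (MvPolynomial (Fin N) K)} :
    ∀ m : Mono N, monomial m (1 : K) ∈ I → ∃ g, MinGen I g ∧ g ≤ m := by
  suffices H : ∀ k, ∀ m : Mono N, mdeg m ≤ k → monomial m (1 : K) ∈ I →
      ∃ g, MinGen I g ∧ g ≤ m by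
    intro m hm
    exact H (mdeg m) m le_rfl hm
  intro k
  induction k with
  | zero =>
    intro m hm hmem
    refine ⟨m, ⟨hmem, fun v hv hne hvI => ?_⟩, le_rfl⟩
    exact absurd (mdeg_lt_of_lt hv hne) (by omega)
  | succ k ih =>
    intro m hm hmem
    classical
    by_cases hmin : ∀ v : Mono N, v ≤ m → v ≠ m → monomial v (1 : K) ∉ I
    · exact ⟨m, ⟨hmem, hmin⟩, le_rfl⟩
    · push_neg at hmin
      obtain ⟨v, hv, hne, hvI⟩ := hmin
      have hlt : mdeg v < mdeg m := mdeg_lt_of_lt hv hne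
      obtain ⟨g, hg, hgle⟩ := ih v (by omega) hvI
      exact ⟨g, hg, le_trans hgle hv⟩

lemma monSlice_eq_minGen {I : Ideal (MvPolynomial (Fin n) K)} {d : ℕ}
    (hgen : ∀ u : Mono n, MinGen I u → mdeg u = d) :
    monSlice I d = {u | MinGen I u} := by
  ext u
  constructor
  · rintro ⟨hdeg, hmem⟩
    obtain ⟨g, hg, hle⟩ := exists_minGen_le u hmem
    have heq : g = u := eq_of_le_of_mdeg_le hle (by rw [hgen g hg, hdeg])
    rw [← heq]
    exact hg
  · intro h
    exact ⟨hgen u h, h.1⟩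

lemma maxVar_le_card {N : ℕ} (u : Mono N) : maxVar u ≤ N := by
  rw [maxVar_le_iff]; intro i _; exact i.2

lemma maxVar_mono' {N : ℕ} {a b : Mono N} (h : ∀ i, a i ≠ 0 → b i ≠ 0) :
    maxVar a ≤ maxVar b := by
  rw [maxVar_le_iff]; intro i hi; exact le_maxVar (h i hi)

lemma maxVar_add_single {N : ℕ} (w : Mono N) (k : Fin N) :
    maxVar (w + Finsupp.single k 1) = max (maxVar w) ((k : ℕ) + 1) := by
  classical
  apply le_antisymm
  · rw [maxVar_le_iff]
    intro i hi
    rw [Finsupp.add_apply, Finsupp.single_apply] at hi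
    by_cases h : k = i
    · subst h; exact le_max_of_le_right (by omega)
    · rw [if_neg h] at hi
      exact le_max_of_le_left (le_maxVar (by omega))
  · apply max_le
    · exact maxVar_mono' (fun i hi => by rw [Finsupp.add_apply]; omega)
    · exact le_maxVar (i := k)
        (by rw [Finsupp.add_apply, Finsupp.single_apply, if_pos rfl]; omega)

lemma maxVar_attained {N : ℕ} {u : Mono N} {m : ℕ} (h : maxVar u = m + 1) :
    ∃ i : Fin N, (i : ℕ) = m ∧ u i ≠ 0 := by
  classical
  have hne : u.support.Nonempty := by
    by_contra h'
    rw [Finset.not_nonempty_iff_eq_empty] at h'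
    rw [maxVar, h'] at h
    simp at h
  obtain ⟨i, hi, hs⟩ := Finset.exists_mem_eq_sup u.support hne (fun i : Fin N => (i : ℕ) + 1)
  refine ⟨i, ?_, Finsupp.mem_support_iff.1 hi⟩
  rw [maxVar, hs] at h
  omega

lemma maxVar_pos {N : ℕ} {u : Mono N} (h : mdeg u ≠ 0) : 1 ≤ maxVar u := by
  have hex : ∃ i, u i ≠ 0 := by
    by_contra h'
    push_neg at h'
    apply h
    rw [mdeg_eq_sum]
    exact Finset.sum_eq_zero fun i _ => h' i
  obtain ⟨i, hi⟩ := hex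
  have := le_maxVar hi
  omega

lemma sub_single_add {N : ℕ} {u : Mono N} {k : Fin N} (h : u k ≠ 0) :
    (u - Finsupp.single k 1 : Mono N) + Finsupp.single k 1 = u := by
  classical
  ext i
  rw [Finsupp.add_apply, Finsupp.tsub_apply, Finsupp.single_apply]
  split_ifs with hk
  · subst hk; omega
  · omega

lemma lexSegIn_iff {N : ℕ} {V : Set (Mono N)} {d : ℕ} (hV : ∀ u ∈ V, mdeg u = d)
    (k : Fin N) :
    LexSegIn ((k : ℕ) + 1) (Dk V k) ↔
      ∀ u ∈ V, maxVar u = (k : ℕ) + 1 → ∀ v : Mono N, mdeg v = d →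
        maxVar v = (k : ℕ) + 1 → LexGT v u → v ∈ V := by
  constructor
  · intro hL u hu hmax v hvdeg hvmax hgt
    have hk : u k ≠ 0 := by
      obtain ⟨i, hieq, hine⟩ := maxVar_attained hmax
      have : i = k := Fin.ext hieq
      rwa [this] at hine
    have hvk : v k ≠ 0 := by
      obtain ⟨i, hieq, hine⟩ := maxVar_attained hvmax
      have : i = k := Fin.ext hieq
      rwa [this] at hine
    have hw : (u - Finsupp.single k 1) ∈ Dk V k := by
      constructor
      · rw [sub_single_add hk]; exact hu
      · rw [sub_single_add hk]; exact hmax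
    have hgt' : LexGT (v - Finsupp.single k 1) (u - Finsupp.single k 1) := by
      rw [← lexGT_add_right (w := Finsupp.single k 1)]
      rw [sub_single_add hk, sub_single_add hvk]
      exact hgt
    have h1 := congrArg mdeg (sub_single_add hk)
    have h2 := congrArg mdeg (sub_single_add hvk)
    rw [mdeg_add, mdeg_single] at h1 h2
    have h3 := hV u hu
    have hdeg' : mdeg (v - Finsupp.single k 1) = mdeg (u - Finsupp.single k 1) := by omega
    have hmax' : maxVar (v - Finsupp.single k 1) ≤ (k : ℕ) + 1 := by
      have hle : maxVar (v - Finsupp.single k 1) ≤ maxVar v :=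
        maxVar_mono' (fun i hi => by rw [Finsupp.tsub_apply] at hi; omega)
      omega
    have hres := hL.2 _ hw _ hdeg' hmax' hgt'
    have hv' := hres.1
    rwa [sub_single_add hvk] at hv'
  · intro hP
    constructor
    · intro w hw
      have h1 : maxVar (w + Finsupp.single k 1) = (k : ℕ) + 1 := hw.2
      rw [maxVar_add_single] at h1
      have := le_max_left (maxVar w) ((k : ℕ) + 1)
      omega
    · intro w hw v hdegv hmaxv hgt
      have hu := hw.1
      have hmax := hw.2
      have hdegw : mdeg (w + Finsupp.single k 1) = d := hV _ hu
      rw [mdeg_add, mdeg_single] at hdegw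
      constructor
      · refine hP (w + Finsupp.single k 1) hu hmax (v + Finsupp.single k 1) ?_ ?_ ?_
        · rw [mdeg_add, mdeg_single]; omega
        · rw [maxVar_add_single, max_eq_right hmaxv]
        · exact lexGT_add_right.2 hgt
      · rw [maxVar_add_single, max_eq_right hmaxv]

lemma sqLexSegIn_iff {N : ℕ} {W : Set (Mono N)} {d : ℕ}
    (hW : ∀ w ∈ W, mdeg w = d ∧ SqFree w) (k : Fin N) :
    SqLexSegIn ((k : ℕ)) (Dk W k) ↔
      ∀ w ∈ W, maxVar w = (k : ℕ) + 1 → ∀ v : Mono N, SqFree v → mdeg v = d →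
        maxVar v = (k : ℕ) + 1 → LexGT v w → v ∈ W := by
  constructor
  · intro hL w hw hmax v hsqv hvdeg hvmax hgt
    have hk : w k ≠ 0 := by
      obtain ⟨i, hieq, hine⟩ := maxVar_attained hmax
      have : i = k := Fin.ext hieq
      rwa [this] at hine
    have hvk : v k ≠ 0 := by
      obtain ⟨i, hieq, hine⟩ := maxVar_attained hvmax
      have : i = k := Fin.ext hieq
      rwa [this] at hine
    have hw0 : (w - Finsupp.single k 1) ∈ Dk W k := by
      constructor
      · rw [sub_single_add hk]; exact hw
      · rw [sub_single_add hk]; exact hmax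
    have hgt' : LexGT (v - Finsupp.single k 1) (w - Finsupp.single k 1) := by
      rw [← lexGT_add_right (w := Finsupp.single k 1)]
      rw [sub_single_add hk, sub_single_add hvk]
      exact hgt
    have h1 := congrArg mdeg (sub_single_add hk)
    have h2 := congrArg mdeg (sub_single_add hvk)
    rw [mdeg_add, mdeg_single] at h1 h2
    have h3 := (hW w hw).1
    have hdeg' : mdeg (v - Finsupp.single k 1) = mdeg (w - Finsupp.single k 1) := by omega
    have hsq' : SqFree (v - Finsupp.single k 1) := by
      intro i
      rw [Finsupp.tsub_apply]
      have := hsqv i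
      omega
    have hmax' : maxVar (v - Finsupp.single k 1) ≤ (k : ℕ) := by
      rw [maxVar_le_iff]
      intro i hi
      have hvi : v i ≠ 0 := by rw [Finsupp.tsub_apply] at hi; omega
      have hle1 := le_maxVar hvi
      have hik : (i : ℕ) ≠ (k : ℕ) := by
        intro hik
        have heq : i = k := Fin.ext hik
        rw [heq, Finsupp.tsub_apply, Finsupp.single_apply, if_pos rfl] at hi
        have := hsqv k
        omega
      omega
    have hres := hL.2 _ hw0 _ hsq' hdeg' hmax' hgt'
    have hv' := hres.1
    rwa [sub_single_add hvk] at hv'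
  · intro hP
    have hDk : ∀ u ∈ Dk W k, SqFree u ∧ maxVar u ≤ (k : ℕ) := by
      intro u hu
      have hmem := hu.1
      have hsq := (hW _ hmem).2
      have huk : u k = 0 := by
        have := hsq k
        rw [Finsupp.add_apply, Finsupp.single_apply, if_pos rfl] at this
        omega
      have hsqu : SqFree u := by
        intro i
        have := hsq i
        rw [Finsupp.add_apply] at this
        omega
      refine ⟨hsqu, ?_⟩
      rw [maxVar_le_iff]
      intro i hi
      have h1 : ((u + Finsupp.single k 1 : Mono N)) i ≠ 0 := by rw [Finsupp.add_apply]; omega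
      have h2 := le_maxVar h1
      rw [hu.2] at h2
      have hik : (i : ℕ) ≠ (k : ℕ) := by
        intro hik
        have heq : i = k := Fin.ext hik
        rw [heq] at hi
        omega
      omega
    constructor
    · exact hDk
    · intro w hw v hsqv hdegv hmaxv hgt
      have hu := hw.1
      have hmax := hw.2
      have hdegw : mdeg (w + Finsupp.single k 1) = d := (hW _ hu).1
      rw [mdeg_add, mdeg_single] at hdegw
      have hvk : v k = 0 := by
        by_contra hvk
        have := le_maxVar hvk
        omega
      have hsqv' : SqFree (v + Finsupp.single k 1) := by
        intro i
        rw [Finsupp.add_apply, Finsupp.single_apply]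
        rcases eq_or_ne k i with h | h
        · rw [if_pos h]
          subst h
          omega
        · rw [if_neg h]
          have := hsqv i
          omega
      constructor
      · refine hP (w + Finsupp.single k 1) hu hmax (v + Finsupp.single k 1) hsqv' ?_ ?_ ?_
        · rw [mdeg_add, mdeg_single]; omega
        · rw [maxVar_add_single, max_eq_right (by omega)]
        · exact lexGT_add_right.2 hgt
      · rw [maxVar_add_single, max_eq_right (by omega)]

lemma move_exchange1 {N : ℕ} (w : Mono N) (p q q' : Fin N) :
    ((w - Finsupp.single q 1 + Finsupp.single q' 1 : Mono N)
      - Finsupp.single q' 1 + Finsupp.single p 1 : Mono N)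
      = w - Finsupp.single q 1 + Finsupp.single p 1 := by
  classical
  ext i
  simp only [Finsupp.coe_add, Pi.add_apply, Finsupp.coe_tsub, Pi.sub_apply,
    Finsupp.single_apply]
  split_ifs <;> omega

lemma move_exchange2 {N : ℕ} (w : Mono N) (p q q' : Fin N) (hq' : w q' ≠ 0)
    (h1 : p ≠ q') (h2 : q ≠ q') (h3 : q ≠ p) :
    ((w - Finsupp.single q' 1 + Finsupp.single p 1 : Mono N)
      - Finsupp.single q 1 + Finsupp.single q' 1 : Mono N)
      = w - Finsupp.single q 1 + Finsupp.single p 1 := by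
  classical
  have e1 : ¬ ((p : Fin N) = q') := h1
  ext i
  simp only [Finsupp.coe_add, Pi.add_apply, Finsupp.coe_tsub, Pi.sub_apply,
    Finsupp.single_apply]
  rcases eq_or_ne q' i with hi | hi
  · subst hi
    rw [if_pos rfl, if_neg (fun hh : p = q' => h1 hh), if_neg (fun hh : q = q' => h2 hh)]
    omega
  · rw [if_neg (fun hh : q' = i => hi hh)]
    split_ifs with ha hb hb
    · exact absurd (ha ▸ hb : q = p) h3
    · omega
    · omega
    · omega

lemma sstableSet_iff_move {N : ℕ} (V : Set (Mono N)) :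
    SStableSet V ↔ ∀ u ∈ V, ∀ p q : Fin N, p < q → u q ≠ 0 →
      (u - Finsupp.single q 1 + Finsupp.single p 1 : Mono N) ∈ V := by
  constructor
  · intro h u hu p q hpq hq
    exact h (u - Finsupp.single q 1) p q hpq (by rw [sub_single_add hq]; exact hu)
  · intro h u p q hpq hmem
    have h1 : ((u + Finsupp.single q 1 : Mono N)) q ≠ 0 := by
      rw [Finsupp.add_apply, Finsupp.single_apply, if_pos rfl]; omega
    have h2 := h _ hmem p q hpq h1
    have heq : ((u + Finsupp.single q 1 : Mono N) - Finsupp.single q 1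
        + Finsupp.single p 1 : Mono N) = u + Finsupp.single p 1 := by
      ext i
      simp only [Finsupp.coe_add, Pi.add_apply, Finsupp.coe_tsub, Pi.sub_apply,
        Finsupp.single_apply]
      split_ifs <;> omega
    rwa [heq] at h2

lemma moveClosed_of_adjClosed {N : ℕ} {V : Set (Mono N)}
    (h : ∀ u ∈ V, ∀ p q : Fin N, (p : ℕ) + 1 = (q : ℕ) → u q ≠ 0 →
      (u - Finsupp.single q 1 + Finsupp.single p 1 : Mono N) ∈ V) :
    ∀ u ∈ V, ∀ p q : Fin N, p < q → u q ≠ 0 →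
      (u - Finsupp.single q 1 + Finsupp.single p 1 : Mono N) ∈ V := by
  suffices H : ∀ c : ℕ, ∀ u ∈ V, ∀ p q : Fin N, (q : ℕ) ≤ (p : ℕ) + c + 1 → p < q →
      u q ≠ 0 → (u - Finsupp.single q 1 + Finsupp.single p 1 : Mono N) ∈ V by
    intro u hu p q hpq hq
    exact H ((q : ℕ)) u hu p q (by omega) hpq hq
  intro c
  induction c with
  | zero =>
    intro u hu p q hle hpq hq
    exact h u hu p q (by have : (p:ℕ) < (q:ℕ) := hpq; omega) hq
  | succ c ih =>
    intro u hu p q hle hpq hq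
    by_cases hc : (q : ℕ) ≤ (p : ℕ) + c + 1
    · exact ih u hu p q hc hpq hq
    · push_neg at hc
      have hpqv : (p : ℕ) < (q : ℕ) := hpq
      set q' : Fin N := ⟨(q : ℕ) - 1, by have := q.2; omega⟩ with hq'def
      have hadj : (q' : ℕ) + 1 = (q : ℕ) := by
        show (q : ℕ) - 1 + 1 = (q : ℕ)
        omega
      have step1 : (u - Finsupp.single q 1 + Finsupp.single q' 1 : Mono N) ∈ V :=
        h u hu q' q hadj hq
      have hne : (u - Finsupp.single q 1 + Finsupp.single q' 1 : Mono N) q' ≠ 0 := by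
        rw [move_apply, if_pos rfl]
        omega
      have hpq' : p < q' := by
        rw [Fin.lt_def]
        show (p : ℕ) < (q : ℕ) - 1
        omega
      have hb2 : (q' : ℕ) ≤ (p : ℕ) + c + 1 := by
        have hv : (q' : ℕ) = (q : ℕ) - 1 := rfl
        omega
      have step2 := ih _ step1 p q' hb2 hpq' hne
      rwa [move_exchange1 u p q q'] at step2

lemma sqMoveClosed_of_adjClosed {N : ℕ} {W : Set (Mono N)} (hsq : ∀ w ∈ W, SqFree w)
    (h : ∀ w ∈ W, ∀ p q : Fin N, (p : ℕ) + 1 = (q : ℕ) → w q ≠ 0 → w p = 0 →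
      (w - Finsupp.single q 1 + Finsupp.single p 1 : Mono N) ∈ W) :
    ∀ w ∈ W, ∀ p q : Fin N, p < q → w q ≠ 0 → w p = 0 →
      (w - Finsupp.single q 1 + Finsupp.single p 1 : Mono N) ∈ W := by
  suffices H : ∀ c : ℕ, ∀ w ∈ W, ∀ p q : Fin N, (q : ℕ) ≤ (p : ℕ) + c + 1 → p < q →
      w q ≠ 0 → w p = 0 → (w - Finsupp.single q 1 + Finsupp.single p 1 : Mono N) ∈ W by
    intro w hw p q hpq hq hp
    exact H ((q : ℕ)) w hw p q (by omega) hpq hq hp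
  intro c
  induction c with
  | zero =>
    intro w hw p q hle hpq hq hp
    exact h w hw p q (by have : (p:ℕ) < (q:ℕ) := hpq; omega) hq hp
  | succ c ih =>
    intro w hw p q hle hpq hq hp
    by_cases hc : (q : ℕ) ≤ (p : ℕ) + c + 1
    · exact ih w hw p q hc hpq hq hp
    · push_neg at hc
      have hpqv : (p : ℕ) < (q : ℕ) := hpq
      set q' : Fin N := ⟨(q : ℕ) - 1, by have := q.2; omega⟩ with hq'def
      have hq'v : (q' : ℕ) = (q : ℕ) - 1 := rfl
      have hadj : (q' : ℕ) + 1 = (q : ℕ) := by omega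
      have hpq' : p < q' := by
        rw [Fin.lt_def]
        omega
      have hq'q : q' ≠ q := fun hh => by rw [Fin.ext_iff] at hh; omega
      have hpne : p ≠ q' := fun hh => by rw [Fin.ext_iff] at hh; rw [Fin.lt_def] at hpq'; omega
      have hqp : ¬ (q = p) := fun hh => by rw [Fin.ext_iff] at hh; omega
      by_cases hwq' : w q' = 0
      · have step1 : (w - Finsupp.single q 1 + Finsupp.single q' 1 : Mono N) ∈ W :=
          h w hw q' q hadj hq hwq'
        have h1 : (w - Finsupp.single q 1 + Finsupp.single q' 1 : Mono N) q' ≠ 0 := by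
          rw [move_apply, if_pos rfl]
          omega
        have h2 : (w - Finsupp.single q 1 + Finsupp.single q' 1 : Mono N) p = 0 := by
          rw [move_apply, if_neg hqp, if_neg (fun hh : q' = p => hpne hh.symm)]
          omega
        have step2 := ih _ step1 p q' (by omega) hpq' h1 h2
        rwa [move_exchange1 w p q q'] at step2
      · have step1 := ih w hw p q' (by omega) hpq' hwq' hp
        have h1 : (w - Finsupp.single q' 1 + Finsupp.single p 1 : Mono N) q ≠ 0 := by
          rw [move_apply, if_neg (fun hh : q' = q => hq'q hh),
            if_neg (fun hh : p = q => hqp hh.symm)]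
          omega
        have h2 : (w - Finsupp.single q' 1 + Finsupp.single p 1 : Mono N) q' = 0 := by
          rw [move_apply, if_pos rfl, if_neg (fun hh : p = q' => hpne hh)]
          have := hsq w hw q'
          omega
        have step2 := h _ step1 q' q hadj h1 h2
        rwa [move_exchange2 w p q q' hwq' hpne (fun hh => hq'q hh.symm) hqp] at step2

-- CHUNK9 --

/-- `I` is `d`-linear lexsegment iff `Φ(I)` is `d`-linear squarefree
lexsegment. -/
theorem stmt15 (n d : ℕ) (hn : 0 < n) (hd : 0 < d) (K : Type) [Field K]
    (I : Ideal (MvPolynomial (Fin n) K)) (hI : MonomialIdeal I)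
    (hgen : ∀ u : Mono n, MinGen I u → mdeg u = d)
    (J : Ideal (MvPolynomial (Fin (n + d - 1)) K))
    (hJ : J = Ideal.span {q : MvPolynomial (Fin (n + d - 1)) K |
        ∃ (u : Mono n) (w : Mono (n + d - 1)),
          MinGen I u ∧ PhiRel u w ∧ q = monomial w (1 : K)}) :
    DLinearLexIdeal d I ↔ DLinearSqLexIdeal d J := by
  classical
  set V : Set (Mono n) := {u | MinGen I u} with hVdef
  have hslice : monSlice I d = V := monSlice_eq_minGen hgen
  have hVdeg : ∀ u ∈ V, mdeg u = d := fun u hu => hgen u hu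
  have hGset : {q : MvPolynomial (Fin (n + d - 1)) K |
      ∃ (u : Mono n) (w : Mono (n + d - 1)), MinGen I u ∧ PhiRel u w ∧ q = monomial w (1 : K)}
      = (fun w => monomial w (1 : K)) '' (phi d '' V) := by
    ext x
    simp only [Set.mem_setOf_eq, Set.mem_image]
    constructor
    · rintro ⟨u, w, hu, hrel, rfl⟩
      obtain ⟨hdeg, rfl⟩ := phiRel_iff.1 hrel
      exact ⟨phi d u, ⟨u, hu, rfl⟩, rfl⟩
    · rintro ⟨w, ⟨u, hu, rfl⟩, rfl⟩
      exact ⟨u, phi d u, hu, phiRel_iff.2 ⟨hgen u hu, rfl⟩, rfl⟩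
  rw [hGset] at hJ
  have hmemJ : ∀ m : Mono (n + d - 1),
      (monomial m (1 : K) ∈ J ↔ ∃ u ∈ V, phi d u ≤ m) := by
    intro m
    rw [hJ, mono_mem_span]
    constructor
    · rintro ⟨g, ⟨u, hu, rfl⟩, hle⟩
      exact ⟨u, hu, hle⟩
    · rintro ⟨u, hu, hle⟩
      exact ⟨phi d u, ⟨u, hu, rfl⟩, hle⟩
  have hJmono : MonomialIdeal J := hJ ▸ monomialIdeal_span _
  have hWsq : ∀ w ∈ phi d '' V, SqFree w ∧ mdeg w = d := by
    rintro w ⟨u, hu, rfl⟩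
    exact ⟨sqFree_phi u, mdeg_phi (hVdeg u hu)⟩
  have hsliceJ : monSlice J d = phi d '' V := by
    ext m
    constructor
    · rintro ⟨hdeg, hmem⟩
      obtain ⟨u, hu, hle⟩ := (hmemJ m).1 hmem
      have heq : phi d u = m :=
        eq_of_le_of_mdeg_le hle (by rw [mdeg_phi (hVdeg u hu), hdeg])
      exact ⟨u, hu, heq⟩
    · rintro ⟨u, hu, rfl⟩
      exact ⟨mdeg_phi (hVdeg u hu), (hmemJ _).2 ⟨u, hu, le_rfl⟩⟩
  have hminJ : ∀ w : Mono (n + d - 1), MinGen J w ↔ w ∈ phi d '' V := by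
    intro w
    constructor
    · rintro ⟨hmem, hmin⟩
      obtain ⟨u, hu, hle⟩ := (hmemJ w).1 hmem
      rcases eq_or_ne (phi d u) w with heq | hne
      · exact ⟨u, hu, heq⟩
      · exact absurd ((hmemJ _).2 ⟨u, hu, le_rfl⟩) (hmin (phi d u) hle hne)
    · rintro ⟨u, hu, rfl⟩
      refine ⟨(hmemJ _).2 ⟨u, hu, le_rfl⟩, ?_⟩
      intro v hv hne hvJ
      obtain ⟨u', hu', hle'⟩ := (hmemJ v).1 hvJ
      have h1 : mdeg v < mdeg (phi d u) := mdeg_lt_of_lt hv hne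
      have h2 : mdeg (phi d u') ≤ mdeg v := mdeg_mono hle'
      rw [mdeg_phi (hVdeg u hu)] at h1
      rw [mdeg_phi (hVdeg u' hu')] at h2
      omega
  have hminJdeg : ∀ w : Mono (n + d - 1), MinGen J w → mdeg w = d := by
    intro w hw
    obtain ⟨u, hu, rfl⟩ := (hminJ w).1 hw
    exact mdeg_phi (hVdeg u hu)
  have hsqJ : SqMonomialIdeal J := by
    refine ⟨hJmono, fun w hw => ?_⟩
    obtain ⟨u, _, rfl⟩ := (hminJ w).1 hw
    exact sqFree_phi u
  -- reduction of the left-hand side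
  have hLHS : DLinearLexIdeal d I ↔
      (SStableSet V ∧ ∀ k : Fin n, LexSegIn ((k : ℕ) + 1) (Dk V k)) := by
    constructor
    · rintro ⟨_, _, hseg⟩
      rw [hslice] at hseg
      exact ⟨hseg.2.1, hseg.2.2⟩
    · rintro ⟨hst, hseg⟩
      refine ⟨hI, hgen, ?_⟩
      rw [hslice]
      exact ⟨hVdeg, hst, hseg⟩
  -- reduction of the right-hand side
  have hRHS : DLinearSqLexIdeal d J ↔
      ((∀ w ∈ phi d '' V, ∀ p q : Fin (n + d - 1), p < q → w q ≠ 0 → w p = 0 →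
        (w - Finsupp.single q 1 + Finsupp.single p 1 : Mono (n + d - 1)) ∈ phi d '' V) ∧
       ∀ k : Fin (n + d - 1), SqLexSegIn ((k : ℕ)) (Dk (phi d '' V) k)) := by
    constructor
    · rintro ⟨⟨_, hstab⟩, _, hseg⟩
      constructor
      · intro w hw p q hpq hq hp
        have hsq := (hWsq w hw).1
        have hq1 : w q = 1 := by have := hsq q; omega
        have hwJ : monomial w (1 : K) ∈ J := by
          obtain ⟨u, hu, rfl⟩ := hw
          exact (hmemJ _).2 ⟨u, hu, le_rfl⟩
        have hmem' := hstab w hsq hwJ p q hpq hq1 hp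
        have : (w - Finsupp.single q 1 + Finsupp.single p 1 : Mono (n + d - 1))
            ∈ monSlice J d := by
          refine ⟨?_, hmem'⟩
          rw [mdeg_move hq (ne_of_lt hpq)]
          exact (hWsq w hw).2
        rwa [hsliceJ] at this
      · intro k
        have := hseg k
        rwa [hsliceJ] at this
    · rintro ⟨hstab, hseg⟩
      refine ⟨⟨hsqJ, ?_⟩, hminJdeg, ?_⟩
      · intro m hsqm hmJ p q hpq hq1 hp0
        obtain ⟨ug, hug, hle⟩ := (hmemJ m).1 hmJ
        have hlei : ∀ i, phi d ug i ≤ m i := Finsupp.le_def.1 hle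
        by_cases hgq : phi d ug q = 0
        · refine (hmemJ _).2 ⟨ug, hug, ?_⟩
          rw [Finsupp.le_def]
          intro i
          rw [move_apply]
          have := hlei i
          split_ifs with h1 h2 h2
          · omega
          · subst h1; omega
          · subst h2; omega
          · omega
        · have hgp : phi d ug p = 0 := by have := hlei p; omega
          have hgmem := hstab (phi d ug) ⟨ug, hug, rfl⟩ p q hpq hgq hgp
          obtain ⟨u'', hu'', heq''⟩ := hgmem
          refine (hmemJ _).2 ⟨u'', hu'', ?_⟩
          rw [heq'', Finsupp.le_def]
          intro i
          rw [move_apply, move_apply]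
          have := hlei i
          have hgq1 : phi d ug q ≤ 1 := sqFree_phi ug q
          split_ifs with h1 h2 h2
          · omega
          · subst h1; omega
          · subst h2; omega
          · omega
      · intro k
        have := hseg k
        rwa [← hsliceJ] at this
  -- the two cross equivalences
  have hstable_iff : SStableSet V ↔
      (∀ w ∈ phi d '' V, ∀ p q : Fin (n + d - 1), p < q → w q ≠ 0 → w p = 0 →
        (w - Finsupp.single q 1 + Finsupp.single p 1 : Mono (n + d - 1)) ∈ phi d '' V) := by
    constructor
    · intro hst
      have hmv := (sstableSet_iff_move V).1 hst
      have hadjW : ∀ w ∈ phi d '' V, ∀ p q : Fin (n + d - 1), (p : ℕ) + 1 = (q : ℕ) →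
          w q ≠ 0 → w p = 0 →
          (w - Finsupp.single q 1 + Finsupp.single p 1 : Mono (n + d - 1)) ∈ phi d '' V := by
        rintro w ⟨u, hu, rfl⟩ p q hadj hq hp
        obtain ⟨p0, q0, hadj0, hq0, heq⟩ :=
          phi_move_rev (hVdeg u hu) (j := q) (j' := p) hadj hq hp
        refine ⟨u - Finsupp.single q0 1 + Finsupp.single p0 1, ?_, heq⟩
        exact hmv u hu p0 q0 (by rw [Fin.lt_def]; omega) hq0
      exact sqMoveClosed_of_adjClosed (fun w hw => (hWsq w hw).1) hadjW
    · intro hsw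
      rw [sstableSet_iff_move]
      apply moveClosed_of_adjClosed
      intro u hu p q hadj hq
      obtain ⟨j, j', hadj', hj, hj', heq⟩ := phi_move (hVdeg u hu) hadj hq
      have hwmem := hsw (phi d u) ⟨u, hu, rfl⟩ j' j (by rw [Fin.lt_def]; omega) hj hj'
      obtain ⟨v, hv, hveq⟩ := hwmem
      have hpq : p ≠ q := fin_ne_of_adj hadj
      have hudeg : mdeg (u - Finsupp.single q 1 + Finsupp.single p 1 : Mono n) = d := by
        rw [mdeg_move hq hpq]
        exact hVdeg u hu
      have hveq2 : v = u - Finsupp.single q 1 + Finsupp.single p 1 :=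
        phi_inj (hVdeg v hv) hudeg (by rw [hveq, heq])
      rw [← hveq2]
      exact hv
  have hWprop : ∀ w ∈ phi d '' V, mdeg w = d ∧ SqFree w :=
    fun w hw => ⟨(hWsq w hw).2, (hWsq w hw).1⟩
  have hseg_iff : (∀ k : Fin n, LexSegIn ((k : ℕ) + 1) (Dk V k)) ↔
      (∀ k : Fin (n + d - 1), SqLexSegIn ((k : ℕ)) (Dk (phi d '' V) k)) := by
    constructor
    · intro hIseg k'
      rw [sqLexSegIn_iff hWprop k']
      rintro w ⟨u, hu, rfl⟩ hmax v hsqv hvdeg hvmax hgt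
      have hud : mdeg u = d := hVdeg u hu
      have hmvu : maxVar (phi d u) = maxVar u + (d - 1) := maxVar_phi hud hd
      have hu1 : 1 ≤ maxVar u := maxVar_pos (by rw [hud]; omega)
      have hun : maxVar u ≤ n := maxVar_le_card u
      have hkn : (k' : ℕ) + 1 - d < n := by omega
      obtain ⟨uv, huvdeg, huveq⟩ := phi_surj hn hd hsqv hvdeg
      have hmvv : maxVar (phi d uv) = maxVar uv + (d - 1) := maxVar_phi huvdeg hd
      have huv1 : 1 ≤ maxVar uv := maxVar_pos (by rw [huvdeg]; omega)
      have hvmax' : maxVar (phi d uv) = (k' : ℕ) + 1 := by rw [huveq]; exact hvmax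
      have h1 := (lexSegIn_iff hVdeg ⟨(k' : ℕ) + 1 - d, hkn⟩).1 (hIseg ⟨(k' : ℕ) + 1 - d, hkn⟩)
        u hu (show maxVar u = (k' : ℕ) + 1 - d + 1 from by omega)
        uv huvdeg (show maxVar uv = (k' : ℕ) + 1 - d + 1 from by omega)
        ((lexGT_phi_iff huvdeg hud).1 (by rw [huveq]; exact hgt))
      exact ⟨uv, h1, huveq⟩
    · intro hJseg k
      rw [lexSegIn_iff hVdeg k]
      intro u hu hmax v hvdeg hvmax hgt
      have hud := hVdeg u hu
      have hkd : (k : ℕ) + d - 1 < n + d - 1 := by have := k.2; omega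
      have h1 := (sqLexSegIn_iff hWprop ⟨(k : ℕ) + d - 1, hkd⟩).1 (hJseg ⟨(k : ℕ) + d - 1, hkd⟩)
        (phi d u) ⟨u, hu, rfl⟩
        (show maxVar (phi d u) = (k : ℕ) + d - 1 + 1 from by
          rw [maxVar_phi hud hd, hmax]; omega)
        (phi d v) (sqFree_phi v) (mdeg_phi hvdeg)
        (show maxVar (phi d v) = (k : ℕ) + d - 1 + 1 from by
          rw [maxVar_phi hvdeg hd, hvmax]; omega)
        ((lexGT_phi_iff hvdeg hud).2 hgt)
      obtain ⟨x, hx, hxeq⟩ := h1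
      have : x = v := phi_inj (hVdeg x hx) hvdeg hxeq
      rw [← this]
      exact hx
  rw [hLHS, hRHS]
  constructor
  · rintro ⟨h1, h2⟩
    exact ⟨hstable_iff.1 h1, hseg_iff.1 h2⟩
  · rintro ⟨h1, h2⟩
    exact ⟨hstable_iff.2 h1, hseg_iff.2 h2⟩


end Paper
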